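/- Let $\Lambda = \lambda I + \sum_{j=1}^{n} \phi_j \phi_j^\top$ with $\lambda > 0$ and $\phi_1, \dots, \phi_n \in \mathbb{R}^d$. Suppose $\psi \in \mathbb{R}^d$ satisfies $\psi^\top \Lambda^{-1} \psi \leq \tau$. If real numbers $\epsilon_1, \dots, \epsilon_n$ satisfy $|\epsilon_j| \leq \nu$ for all $j$, then $\left| \psi^\top \Lambda^{-1} \sum_{j=1}^n \phi_j \epsilon_j \right| \leq \nu \sqrt{n \tau}$. -/

import Mathlib

open BigOperators Matrix

lemma dotProduct_sum' {d n : ℕ} (x : Fin d → ℝ) (f : Fin n → Fin d → ℝ) :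
    x ⬝ᵥ (∑ j, f j) = ∑ j, x ⬝ᵥ f j := by
  simp only [dotProduct, Finset.sum_apply, Finset.mul_sum]
  exact Finset.sum_comm

lemma sum_mulVec' {d n : ℕ} (M : Fin n → Matrix (Fin d) (Fin d) ℝ) (y : Fin d → ℝ) :
    (∑ j, M j) *ᵥ y = ∑ j, M j *ᵥ y := by
  ext i
  simp only [mulVec, dotProduct, Finset.sum_apply, Matrix.sum_apply, Finset.sum_mul]
  exact Finset.sum_comm

lemma dotProduct_self_nonneg' {d : ℕ} (x : Fin d → ℝ) : 0 ≤ x ⬝ᵥ x := by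
  simp only [dotProduct]
  exact Finset.sum_nonneg fun i _ => mul_self_nonneg _

lemma vecMulVec_mulVec' {d : ℕ} (w v x : Fin d → ℝ) :
    vecMulVec w v *ᵥ x = (v ⬝ᵥ x) • w := by
  ext i
  simp [vecMulVec_apply, mulVec, dotProduct, Finset.mul_sum, Finset.sum_mul,
    mul_comm, mul_assoc, mul_left_comm]

/-- Misspecification error bound (the `J₂` term): if `ψᵀ Λ⁻¹ ψ ≤ τ` and `|εⱼ| ≤ ν`, then
`|ψᵀ Λ⁻¹ ∑ⱼ φⱼ εⱼ| ≤ ν √(n τ)`. -/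
theorem misspecification_bound {d n : ℕ} (lam τ ν : ℝ) (hlam : 0 < lam)
    (hτ : 0 ≤ τ) (hν : 0 ≤ ν)
    (φ : Fin n → Fin d → ℝ) (Λ : Matrix (Fin d) (Fin d) ℝ)
    (hΛ : Λ = lam • (1 : Matrix (Fin d) (Fin d) ℝ) + ∑ j, vecMulVec (φ j) (φ j))
    (ψ : Fin d → ℝ) (hψ : ψ ⬝ᵥ (Λ⁻¹ *ᵥ ψ) ≤ τ)
    (ε : Fin n → ℝ) (hε : ∀ j, |ε j| ≤ ν) :
    |ψ ⬝ᵥ (Λ⁻¹ *ᵥ (∑ j, ε j • φ j))| ≤ ν * Real.sqrt (n * τ) := by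
  -- quadratic form of Λ
  have hquad : ∀ x y : Fin d → ℝ,
      x ⬝ᵥ (Λ *ᵥ y) = lam * (x ⬝ᵥ y) + ∑ j, (φ j ⬝ᵥ x) * (φ j ⬝ᵥ y) := by
    intro x y
    rw [hΛ, Matrix.add_mulVec, sum_mulVec', dotProduct_add, dotProduct_sum']
    congr 1
    · simp [Matrix.smul_mulVec, dotProduct_smul, smul_eq_mul]
    · refine Finset.sum_congr rfl fun j _ => ?_
      rw [vecMulVec_mulVec', dotProduct_smul, smul_eq_mul, mul_comm,
        dotProduct_comm x (φ j)]
  -- Λ is symmetric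
  have hsym : Λᵀ = Λ := by
    rw [hΛ]
    ext i k
    simp [Matrix.transpose_apply, Matrix.add_apply, Matrix.sum_apply,
      vecMulVec_apply, Matrix.one_apply, mul_comm]
    rcases eq_or_ne i k with h | h <;> simp [h, eq_comm]
  -- Λ is positive definite
  have hpd : Λ.PosDef := by
    rw [Matrix.posDef_iff_dotProduct_mulVec]
    constructor
    · rw [Matrix.IsHermitian]
      simpa using hsym
    · intro x hx
      have hxx : 0 < x ⬝ᵥ x := by
        have := dotProduct_self_eq_zero (v := x)
        rcases lt_or_eq_of_le (dotProduct_self_nonneg' x) with h | h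
        · exact h
        · exact absurd (this.mp h.symm) hx
      have : 0 < lam * (x ⬝ᵥ x) + ∑ j, (φ j ⬝ᵥ x) * (φ j ⬝ᵥ x) := by
        have h1 : 0 < lam * (x ⬝ᵥ x) := mul_pos hlam hxx
        have h2 : 0 ≤ ∑ j, (φ j ⬝ᵥ x) * (φ j ⬝ᵥ x) :=
          Finset.sum_nonneg fun j _ => mul_self_nonneg _
        linarith
      simpa [star, hquad x x] using this
  have hunit : IsUnit Λ.det := (Matrix.isUnit_iff_isUnit_det Λ).mp hpd.isUnit
  have hΛinv : Λ * Λ⁻¹ = 1 := Matrix.mul_nonsing_inv Λ hunit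
  set v : Fin d → ℝ := Λ⁻¹ *ᵥ ψ with hv
  have hΛv : Λ *ᵥ v = ψ := by
    rw [hv, Matrix.mulVec_mulVec, hΛinv, Matrix.one_mulVec]
  -- ψ ⬝ᵥ Λ⁻¹ *ᵥ u = v ⬝ᵥ u
  have hswap : ∀ u : Fin d → ℝ, ψ ⬝ᵥ (Λ⁻¹ *ᵥ u) = v ⬝ᵥ u := by
    intro u
    rw [Matrix.dotProduct_mulVec, hv]
    congr 1
    have hinvsym : (Λ⁻¹)ᵀ = Λ⁻¹ := by rw [Matrix.transpose_nonsing_inv, hsym]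
    rw [← hinvsym, Matrix.vecMul_transpose, hinvsym]
  -- key sum bound
  have hvψ : v ⬝ᵥ ψ ≤ τ := by
    have : ψ ⬝ᵥ (Λ⁻¹ *ᵥ ψ) = v ⬝ᵥ ψ := hswap ψ
    linarith [hψ]
  have hsum : ∑ j, (φ j ⬝ᵥ v) ^ 2 ≤ τ := by
    have h1 : v ⬝ᵥ (Λ *ᵥ v) = lam * (v ⬝ᵥ v) + ∑ j, (φ j ⬝ᵥ v) * (φ j ⬝ᵥ v) :=
      hquad v v
    rw [hΛv] at h1
    have h2 : 0 ≤ lam * (v ⬝ᵥ v) :=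
      mul_nonneg hlam.le (dotProduct_self_nonneg' v)
    calc ∑ j, (φ j ⬝ᵥ v) ^ 2 = ∑ j, (φ j ⬝ᵥ v) * (φ j ⬝ᵥ v) := by
          simp [sq]
      _ ≤ v ⬝ᵥ ψ := by linarith
      _ ≤ τ := hvψ
  -- rewrite the LHS
  have hLHS : ψ ⬝ᵥ (Λ⁻¹ *ᵥ (∑ j, ε j • φ j)) = ∑ j, ε j * (φ j ⬝ᵥ v) := by
    rw [hswap]
    rw [dotProduct_sum']
    refine Finset.sum_congr rfl fun j _ => ?_
    rw [dotProduct_smul, smul_eq_mul, dotProduct_comm]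
  rw [hLHS]
  -- Cauchy-Schwarz
  have habs : |∑ j, ε j * (φ j ⬝ᵥ v)| ≤ ν * ∑ j, |φ j ⬝ᵥ v| := by
    calc |∑ j, ε j * (φ j ⬝ᵥ v)| ≤ ∑ j, |ε j * (φ j ⬝ᵥ v)| :=
          Finset.abs_sum_le_sum_abs _ _
      _ ≤ ∑ j, ν * |φ j ⬝ᵥ v| := by
          refine Finset.sum_le_sum fun j _ => ?_
          rw [abs_mul]
          exact mul_le_mul_of_nonneg_right (hε j) (abs_nonneg _)
      _ = ν * ∑ j, |φ j ⬝ᵥ v| := (Finset.mul_sum _ _ _).symm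
  have hCS : (∑ j, |φ j ⬝ᵥ v|) ^ 2 ≤ (n : ℝ) * τ := by
    have := Finset.sum_mul_sq_le_sq_mul_sq Finset.univ (fun _ : Fin n => (1 : ℝ))
      (fun j => |φ j ⬝ᵥ v|)
    simp only [one_mul, one_pow, Finset.sum_const, Finset.card_univ,
      Fintype.card_fin, nsmul_eq_mul, sq_abs, mul_one] at this
    calc (∑ j, |φ j ⬝ᵥ v|) ^ 2 ≤ (n : ℝ) * ∑ j, (φ j ⬝ᵥ v) ^ 2 := this
      _ ≤ (n : ℝ) * τ := by
          exact mul_le_mul_of_nonneg_left hsum (Nat.cast_nonneg n)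
  have hsqrt : ∑ j, |φ j ⬝ᵥ v| ≤ Real.sqrt ((n : ℝ) * τ) := by
    have h0 : 0 ≤ ∑ j, |φ j ⬝ᵥ v| := Finset.sum_nonneg fun j _ => abs_nonneg _
    nlinarith [Real.sq_sqrt (mul_nonneg (Nat.cast_nonneg n) hτ),
      Real.sqrt_nonneg ((n : ℝ) * τ)]
  calc |∑ j, ε j * (φ j ⬝ᵥ v)| ≤ ν * ∑ j, |φ j ⬝ᵥ v| := habs
    _ ≤ ν * Real.sqrt ((n : ℝ) * τ) := mul_le_mul_of_nonneg_left hsqrt hν
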